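/- Let n = 2r − 1 be odd with r ≥ 2. Then the leading principal r×r submatrix W̄_Q(A_n) of the Q-walk matrix W_Q(A_n) equals the walk matrix W(M_2) of the matrix M_2; that is, for all 1 ≤ i, j ≤ r the (i,j)-entry of W_Q(A_n) equals the (i,j)-entry of W(M_2). -/

import Mathlib

open Matrix BigOperators

/-- The signless Laplacian `Q = A + D` of the Dynkin (path) graph `A_n` (0-based indexing). -/
def QmatAn (n : ℕ) : Matrix (Fin n) (Fin n) ℤ :=
  Matrix.of fun i j =>
    (if (i : ℕ) + 1 = (j : ℕ) ∨ (j : ℕ) + 1 = (i : ℕ) then 1 else 0) +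
    (if i = j then (if (i : ℕ) = 0 ∨ (i : ℕ) = n - 1 then 1 else 2) else 0)

/-- The `Q`-walk matrix of `A_n`: its `j`-th column is `Q^j · e_n` (0-based `j`). -/
def WQAn (n : ℕ) : Matrix (Fin n) (Fin n) ℤ :=
  Matrix.of fun i j => ((QmatAn n) ^ (j : ℕ)).mulVec (fun _ => 1) i

/-- The walk matrix of a square matrix `M`: its `j`-th column is `M^j · e` (0-based `j`). -/
def walkMatrix {r : ℕ} (M : Matrix (Fin r) (Fin r) ℤ) : Matrix (Fin r) (Fin r) ℤ :=
  Matrix.of fun i j => (M ^ (j : ℕ)).mulVec (fun _ => 1) i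

/-- The divisor-type matrix `M₂ = B₂ + D̄`: tridiagonal with diagonal
`(1, 2, ..., 2)`, superdiagonal entries `1`, subdiagonal entries `1` except the
last one which is `2` (0-based indexing). -/
def M2 (r : ℕ) : Matrix (Fin r) (Fin r) ℤ :=
  Matrix.of fun i j =>
    if i = j then (if (i : ℕ) = 0 then 1 else 2)
    else if (i : ℕ) + 1 = (j : ℕ) then 1
    else if (j : ℕ) + 1 = (i : ℕ) then (if (i : ℕ) = r - 1 then 2 else 1)
    else 0


lemma sum_ind_succ (n k : ℕ) (c : ℤ) (v : Fin n → ℤ) :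
    ∑ j : Fin n, (if k = (j:ℕ) then c else 0) * v j =
      if h : k < n then c * v ⟨k, h⟩ else 0 := by
  by_cases h : k < n
  · rw [dif_pos h, Finset.sum_eq_single (⟨k, h⟩ : Fin n)]
    · simp
    · intro b _ hb
      have hk : ¬ (k = (b:ℕ)) := fun hc => hb (Fin.ext hc.symm)
      simp [hk]
    · simp
  · rw [dif_neg h]
    apply Finset.sum_eq_zero
    intro b _
    have : ¬ (k = (b:ℕ)) := by have := b.isLt; omega
    simp [this]

lemma sum_ind_pred (n k : ℕ) (hk : k < n) (c : ℤ) (v : Fin n → ℤ) :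
    ∑ j : Fin n, (if (j:ℕ) + 1 = k then c else 0) * v j =
      if h : 0 < k then c * v ⟨k - 1, by omega⟩ else 0 := by
  by_cases h : 0 < k
  · rw [dif_pos h, Finset.sum_eq_single (⟨k - 1, by omega⟩ : Fin n)]
    · simp [Nat.sub_add_cancel h]
    · intro b _ hb
      have hk2 : ¬ ((b:ℕ) + 1 = k) := fun hc => hb (Fin.ext (show (b:ℕ) = k - 1 by omega))
      simp [hk2]
    · simp
  · rw [dif_neg h]
    apply Finset.sum_eq_zero
    intro b _
    have : ¬ ((b:ℕ) + 1 = k) := by omega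
    simp [this]

lemma sum_ind_diag {n : ℕ} (i : Fin n) (c : ℤ) (v : Fin n → ℤ) :
    ∑ j : Fin n, (if i = j then c else 0) * v j = c * v i := by
  rw [Finset.sum_eq_single i]
  · simp
  · intro b _ hb
    have : ¬ (i = b) := fun hc => hb hc.symm
    simp [this]
  · simp

lemma mulVec_Q (n : ℕ) (v : Fin n → ℤ) (i : Fin n) :
    (QmatAn n).mulVec v i =
      (if h : (i:ℕ) + 1 < n then v ⟨(i:ℕ) + 1, h⟩ else 0) +
      (if h : 0 < (i:ℕ) then v ⟨(i:ℕ) - 1, by have := i.isLt; omega⟩ else 0) +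
      (if (i:ℕ) = 0 ∨ (i:ℕ) = n - 1 then 1 else 2) * v i := by
  have key : ∀ j : Fin n, QmatAn n i j * v j =
      (if (i:ℕ) + 1 = (j:ℕ) then (1:ℤ) else 0) * v j +
      (if (j:ℕ) + 1 = (i:ℕ) then (1:ℤ) else 0) * v j +
      (if i = j then (if (i:ℕ) = 0 ∨ (i:ℕ) = n - 1 then (1:ℤ) else 2) else 0) * v j := by
    intro j
    simp only [QmatAn, Matrix.of_apply]
    by_cases h1 : (i:ℕ) + 1 = (j:ℕ) <;> by_cases h2 : (j:ℕ) + 1 = (i:ℕ)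
    · omega
    · simp [h1, h2, show i ≠ j from fun hc => by subst hc; omega]
    · simp [h1, h2, show i ≠ j from fun hc => by subst hc; omega]
    · simp [h1, h2]
  rw [Matrix.mulVec, show (QmatAn n i ⬝ᵥ v) = ∑ j, QmatAn n i j * v j from rfl]
  simp only [key]
  rw [Finset.sum_add_distrib, Finset.sum_add_distrib,
    sum_ind_succ n ((i:ℕ)+1) 1 v, sum_ind_pred n (i:ℕ) i.isLt 1 v, sum_ind_diag i _ v]
  by_cases h : (i:ℕ) + 1 < n <;> by_cases h' : 0 < (i:ℕ) <;>
    simp [h, h']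

lemma mulVec_M2 (r : ℕ) (w : Fin r → ℤ) (i : Fin r) :
    (M2 r).mulVec w i =
      (if h : (i:ℕ) + 1 < r then w ⟨(i:ℕ) + 1, h⟩ else 0) +
      (if h : 0 < (i:ℕ) then (if (i:ℕ) = r - 1 then 2 else 1) *
          w ⟨(i:ℕ) - 1, by have := i.isLt; omega⟩ else 0) +
      (if (i:ℕ) = 0 then 1 else 2) * w i := by
  have key : ∀ j : Fin r, M2 r i j * w j =
      (if (i:ℕ) + 1 = (j:ℕ) then (1:ℤ) else 0) * w j +
      (if (j:ℕ) + 1 = (i:ℕ) then (if (i:ℕ) = r - 1 then (2:ℤ) else 1) else 0) * w j +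
      (if i = j then (if (i:ℕ) = 0 then (1:ℤ) else 2) else 0) * w j := by
    intro j
    simp only [M2, Matrix.of_apply]
    by_cases h0 : i = j
    · have h1 : ¬ ((i:ℕ) + 1 = (j:ℕ)) := by omega
      have h2 : ¬ ((j:ℕ) + 1 = (i:ℕ)) := by subst h0; omega
      simp [h0, h1, h2]
    · have h0' : ¬ ((i:ℕ) = (j:ℕ)) := fun hc => h0 (Fin.ext hc)
      by_cases h1 : (i:ℕ) + 1 = (j:ℕ) <;> by_cases h2 : (j:ℕ) + 1 = (i:ℕ)
      · omega
      · simp [h0, h1, h2]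
      · simp [h0, h1, h2]
      · simp [h0, h1, h2]
  rw [Matrix.mulVec, show (M2 r i ⬝ᵥ w) = ∑ j, M2 r i j * w j from rfl]
  simp only [key]
  rw [Finset.sum_add_distrib, Finset.sum_add_distrib,
    sum_ind_succ r ((i:ℕ)+1) 1 w, sum_ind_pred r (i:ℕ) i.isLt _ w, sum_ind_diag i _ w]
  by_cases h : (i:ℕ) + 1 < r <;> by_cases h' : 0 < (i:ℕ) <;>
    simp [h, h']

/-- `Q` preserves reflection symmetry of vectors. -/
lemma Q_preserves_symm (n : ℕ) (v : Fin n → ℤ)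
    (hv : ∀ a b : Fin n, (a:ℕ) + (b:ℕ) = n - 1 → v a = v b)
    (a b : Fin n) (hab : (a:ℕ) + (b:ℕ) = n - 1) :
    (QmatAn n).mulVec v a = (QmatAn n).mulVec v b := by
  have ha := a.isLt; have hb := b.isLt
  rw [mulVec_Q, mulVec_Q]
  have e1 : (if h : (a:ℕ) + 1 < n then v ⟨(a:ℕ) + 1, h⟩ else 0) =
      (if h : 0 < (b:ℕ) then v ⟨(b:ℕ) - 1, by omega⟩ else 0) := by
    by_cases h : (a:ℕ) + 1 < n
    · rw [dif_pos h, dif_pos (show 0 < (b:ℕ) by omega)]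
      exact hv _ _ (by simp; omega)
    · rw [dif_neg h, dif_neg (show ¬ 0 < (b:ℕ) by omega)]
  have e2 : (if h : 0 < (a:ℕ) then v ⟨(a:ℕ) - 1, by omega⟩ else 0) =
      (if h : (b:ℕ) + 1 < n then v ⟨(b:ℕ) + 1, h⟩ else 0) := by
    by_cases h : 0 < (a:ℕ)
    · rw [dif_pos h, dif_pos (show (b:ℕ) + 1 < n by omega)]
      exact hv _ _ (by simp; omega)
    · rw [dif_neg h, dif_neg (show ¬ (b:ℕ) + 1 < n by omega)]
  have e3 : (if (a:ℕ) = 0 ∨ (a:ℕ) = n - 1 then (1:ℤ) else 2) * v a =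
      (if (b:ℕ) = 0 ∨ (b:ℕ) = n - 1 then (1:ℤ) else 2) * v b := by
    rw [hv a b hab]
    by_cases h : (a:ℕ) = 0 ∨ (a:ℕ) = n - 1
    · rw [if_pos h, if_pos (by omega)]
    · rw [if_neg h, if_neg (by omega)]
  rw [e1, e2, e3]; ring

set_option maxHeartbeats 2000000 in
lemma Q_fold (r : ℕ) (hr : 2 ≤ r) (n : ℕ) (hn : n = 2 * r - 1) (v : Fin n → ℤ)
    (hv : ∀ a b : Fin n, (a:ℕ) + (b:ℕ) = n - 1 → v a = v b) (i : Fin r) :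
    (QmatAn n).mulVec v (Fin.castLE (le_of_lt (by omega)) i) =
      (M2 r).mulVec (fun t => v (Fin.castLE (le_of_lt (by omega : r < n)) t)) i := by
  have hi := i.isLt
  rw [mulVec_Q, mulVec_M2]
  have hcast : ((Fin.castLE (le_of_lt (by omega : r < n)) i : Fin n) : ℕ) = (i:ℕ) := rfl
  simp only [hcast]
  by_cases h0 : (i:ℕ) = 0
  · -- first row
    have h1 : (i:ℕ) + 1 < n := by omega
    have h1' : (i:ℕ) + 1 < r := by omega
    rw [dif_pos h1, dif_pos h1', dif_neg (show ¬ 0 < (i:ℕ) by omega),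
      dif_neg (show ¬ 0 < (i:ℕ) by omega), if_pos (Or.inl h0), if_pos h0]
    simp only [Fin.castLE_mk]
  · by_cases hlast : (i:ℕ) = r - 1
    · -- middle row
      have h1 : (i:ℕ) + 1 < n := by omega
      have h1' : ¬ ((i:ℕ) + 1 < r) := by omega
      rw [dif_pos h1, dif_neg h1', dif_pos (show 0 < (i:ℕ) by omega),
        dif_pos (show 0 < (i:ℕ) by omega),
        if_neg (show ¬((i:ℕ) = 0 ∨ (i:ℕ) = n - 1) by omega), if_neg h0, if_pos hlast]
      have hs : v ⟨(i:ℕ) + 1, h1⟩ = v ⟨(i:ℕ) - 1, by omega⟩ :=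
        hv ⟨(i:ℕ) + 1, h1⟩ ⟨(i:ℕ) - 1, by omega⟩ (by simp; omega)
      simp only [Fin.castLE_mk]
      linear_combination hs
    · -- interior row
      have h1 : (i:ℕ) + 1 < n := by omega
      have h1' : (i:ℕ) + 1 < r := by omega
      rw [dif_pos h1, dif_pos h1', dif_pos (show 0 < (i:ℕ) by omega),
        dif_pos (show 0 < (i:ℕ) by omega),
        if_neg (show ¬((i:ℕ) = 0 ∨ (i:ℕ) = n - 1) by omega), if_neg h0, if_neg hlast]
      simp only [Fin.castLE_mk]
      ring

theorem main_aux (r : ℕ) (hr : 2 ≤ r) (n : ℕ) (hn : n = 2 * r - 1) (k : ℕ) :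
    (∀ a b : Fin n, (a:ℕ) + (b:ℕ) = n - 1 →
      ((QmatAn n) ^ k).mulVec (fun _ => 1) a = ((QmatAn n) ^ k).mulVec (fun _ => 1) b) ∧
    (∀ i : Fin r, ((QmatAn n) ^ k).mulVec (fun _ => 1) (Fin.castLE (le_of_lt (by omega)) i) =
      ((M2 r) ^ k).mulVec (fun _ => 1) i) := by
  induction k with
  | zero =>
    constructor
    · intro a b _; simp [Matrix.one_mulVec]
    · intro i; simp [Matrix.one_mulVec]
  | succ k ih =>
    obtain ⟨ihs, ihf⟩ := ih
    have hQ : ((QmatAn n) ^ (k+1)).mulVec (fun _ => (1:ℤ)) =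
        (QmatAn n).mulVec (((QmatAn n) ^ k).mulVec (fun _ => 1)) := by
      rw [Matrix.mulVec_mulVec, ← pow_succ']
    have hM : ((M2 r) ^ (k+1)).mulVec (fun _ => (1:ℤ)) =
        (M2 r).mulVec (((M2 r) ^ k).mulVec (fun _ => 1)) := by
      rw [Matrix.mulVec_mulVec, ← pow_succ']
    constructor
    · intro a b hab
      rw [hQ]
      exact Q_preserves_symm n _ ihs a b hab
    · intro i
      rw [hQ, hM, Q_fold r hr n hn _ ihs i]
      congr 1
      funext t
      exact ihf t

/-- For odd `n = 2r - 1`, the leading principal `r × r` submatrix of `W_Q(A_n)`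
equals the walk matrix of `M₂`. -/
theorem WQAn_bar_eq_walk_M2 (r : ℕ) (hr : 2 ≤ r) (n : ℕ) (hn : n = 2 * r - 1)
    (i j : Fin r) :
    WQAn n (Fin.castLE (by omega) i) (Fin.castLE (by omega) j) = walkMatrix (M2 r) i j := by
  have h := (main_aux r hr n hn (j:ℕ)).2 i
  simpa [WQAn, walkMatrix] using h
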